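/- arXiv:1905.07216 — 2 statements merged into one kernel-verified Lean document; each statement's English description precedes it below -/
import Mathlib

section
/- There is a constant C > 0 such that for every h ∈ (0, 1) and every x ∈ [0,1]^2, ∫_0^1 ∫_{[0,1]^2} (r^{1/4} + |x - y| + h)^{-6} dy dr ≤ C (1 - log h). -/
open Real MeasureTheory

/-- There is `C > 0` such that for every `h ∈ (0,1)` and every `x ∈ [0,1]²`,
`∫_0^1 ∫_{[0,1]²} (r^{1/4} + ‖x-y‖ + h)^{-6} dy dr ≤ C (1 - log h)`. -/
theorem stmt6 :
    ∃ C : ℝ, 0 < C ∧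
      ∀ h ∈ Set.Ioo (0 : ℝ) 1,
        ∀ x ∈ {y : EuclideanSpace ℝ (Fin 2) | ∀ i, y i ∈ Set.Icc (0 : ℝ) 1},
          (∫ r in Set.Ioo (0 : ℝ) 1,
            ∫ y in {y : EuclideanSpace ℝ (Fin 2) | ∀ i, y i ∈ Set.Icc (0 : ℝ) 1},
              (r ^ (1 / 4 : ℝ) + ‖x - y‖ + h) ^ (-6 : ℝ))
            ≤ C * (1 - Real.log h) := by
  classical
  set g : EuclideanSpace ℝ (Fin 2) → ℝ := fun w => (1 + ‖w‖) ^ (-6 : ℝ) with hgdef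
  have hgint : Integrable g := by
    apply integrable_one_add_norm
    simp [finrank_euclideanSpace]
    norm_num
  set I : ℝ := ∫ w, g w with hIdef
  have hI0 : 0 ≤ I := integral_nonneg fun w => by positivity
  refine ⟨4 * I + 1, by positivity, ?_⟩
  rintro h ⟨hh0, hh1⟩ x hx
  set D := {y : EuclideanSpace ℝ (Fin 2) | ∀ i, y i ∈ Set.Icc (0 : ℝ) 1} with hD
  have hL : Real.log h < 0 := Real.log_neg hh0 hh1
  -- the key per-r bound
  have key : ∀ r ∈ Set.Ioo (0 : ℝ) 1,
      (∫ y in D, (r ^ (1 / 4 : ℝ) + ‖x - y‖ + h) ^ (-6 : ℝ))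
        ≤ I * (r + h ^ 4)⁻¹ := by
    intro r hr
    set a : ℝ := r ^ (1 / 4 : ℝ) + h with ha
    have hs0 : (0 : ℝ) ≤ r ^ (1 / 4 : ℝ) := Real.rpow_nonneg hr.1.le _
    have ha0 : 0 < a := by positivity
    have h1 : ∀ z : EuclideanSpace ℝ (Fin 2),
        (a + ‖z‖) ^ (-6 : ℝ) = a ^ (-6 : ℝ) * g (a⁻¹ • z) := by
      intro z
      have : a + ‖z‖ = a * (1 + ‖a⁻¹ • z‖) := by
        rw [norm_smul, Real.norm_eq_abs, abs_of_pos (inv_pos.2 ha0)]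
        field_simp
      rw [this, Real.mul_rpow ha0.le (by positivity)]
    have hf0int : Integrable (fun z : EuclideanSpace ℝ (Fin 2) => (a + ‖z‖) ^ (-6 : ℝ)) := by
      have h2 := (hgint.comp_smul (inv_ne_zero ha0.ne')).const_mul (a ^ (-6 : ℝ))
      exact h2.congr (Filter.Eventually.of_forall fun z => (h1 z).symm)
    have hval : (∫ z : EuclideanSpace ℝ (Fin 2), (a + ‖z‖) ^ (-6 : ℝ))
        = a ^ 2 * a ^ (-6 : ℝ) * I := by
      simp_rw [h1]
      rw [integral_const_mul, Measure.integral_comp_inv_smul volume g a]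
      simp [finrank_euclideanSpace, abs_of_pos ha0]
      ring
    have htrans : Integrable (fun y : EuclideanSpace ℝ (Fin 2) => (a + ‖x - y‖) ^ (-6 : ℝ)) := by
      exact (integrable_comp_sub_left
        (fun z : EuclideanSpace ℝ (Fin 2) => (a + ‖z‖) ^ (-6 : ℝ)) x).2 hf0int
    have hrw : ∀ y : EuclideanSpace ℝ (Fin 2),
        r ^ (1 / 4 : ℝ) + ‖x - y‖ + h = a + ‖x - y‖ := fun y => by rw [ha]; ring
    have step1 : (∫ y in D, (r ^ (1 / 4 : ℝ) + ‖x - y‖ + h) ^ (-6 : ℝ))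
        ≤ ∫ y : EuclideanSpace ℝ (Fin 2), (a + ‖x - y‖) ^ (-6 : ℝ) := by
      simp_rw [hrw]
      exact setIntegral_le_integral htrans
        (Filter.Eventually.of_forall fun y => by positivity)
    have step2 : (∫ y : EuclideanSpace ℝ (Fin 2), (a + ‖x - y‖) ^ (-6 : ℝ))
        = a ^ 2 * a ^ (-6 : ℝ) * I := by
      rw [integral_sub_left_eq_self
        (fun z : EuclideanSpace ℝ (Fin 2) => (a + ‖z‖) ^ (-6 : ℝ)) volume x, hval]
    have hs4 : (r ^ (1 / 4 : ℝ)) ^ (4 : ℕ) = r := by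
      rw [← Real.rpow_natCast (r ^ (1 / 4 : ℝ)) 4, ← Real.rpow_mul hr.1.le]
      norm_num
    have expand : ∀ s t : ℝ, 0 ≤ s → 0 ≤ t → s ^ 4 + t ^ 4 ≤ (s + t) ^ 4 := by
      intro s t hs ht
      nlinarith [mul_nonneg (mul_nonneg (mul_nonneg hs hs) hs) ht,
        mul_nonneg (mul_nonneg hs hs) (mul_nonneg ht ht),
        mul_nonneg hs (mul_nonneg ht (mul_nonneg ht ht))]
    have ha4 : r + h ^ 4 ≤ a ^ 4 := by
      rw [ha]
      conv_lhs => rw [← hs4]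
      exact expand _ _ hs0 hh0.le
    have hfin : a ^ 2 * a ^ (-6 : ℝ) * I ≤ I * (r + h ^ 4)⁻¹ := by
      have hane : a ^ 2 * a ^ (-6 : ℝ) = (a ^ 4)⁻¹ := by
        rw [show (-6 : ℝ) = -(6 : ℕ) by norm_num, Real.rpow_neg ha0.le,
          Real.rpow_natCast]
        field_simp
      rw [hane, mul_comm]
      have : (a ^ 4)⁻¹ ≤ (r + h ^ 4)⁻¹ := by
        apply inv_anti₀ (by nlinarith [hr.1, pow_pos hh0 4]) ha4
      exact mul_le_mul_of_nonneg_left this hI0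
    calc (∫ y in D, (r ^ (1 / 4 : ℝ) + ‖x - y‖ + h) ^ (-6 : ℝ))
        ≤ ∫ y : EuclideanSpace ℝ (Fin 2), (a + ‖x - y‖) ^ (-6 : ℝ) := step1
      _ = a ^ 2 * a ^ (-6 : ℝ) * I := step2
      _ ≤ I * (r + h ^ 4)⁻¹ := hfin
  -- the majorant is integrable on (0,1)
  have hGint : IntegrableOn (fun r => I * (r + h ^ 4)⁻¹) (Set.Ioo (0 : ℝ) 1) := by
    apply (ContinuousOn.integrableOn_Icc ?_).mono_set Set.Ioo_subset_Icc_self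
    refine continuousOn_const.mul (ContinuousOn.inv₀ (by fun_prop) ?_)
    intro r hr
    exact (by nlinarith [hr.1, pow_pos hh0 4] : (0:ℝ) < r + h ^ 4).ne'
  -- compare with the majorant
  have houter : (∫ r in Set.Ioo (0 : ℝ) 1,
      ∫ y in D, (r ^ (1 / 4 : ℝ) + ‖x - y‖ + h) ^ (-6 : ℝ))
        ≤ ∫ r in Set.Ioo (0 : ℝ) 1, I * (r + h ^ 4)⁻¹ := by
    apply integral_mono_of_nonneg
    · filter_upwards [ae_restrict_mem measurableSet_Ioo] with r hr
      exact integral_nonneg fun y => Real.rpow_nonneg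
        (by have := hr.1; positivity) _
    · exact hGint
    · filter_upwards [ae_restrict_mem measurableSet_Ioo] with r hr using key r hr
  -- compute the majorant's integral
  have hcomp : (∫ r in Set.Ioo (0 : ℝ) 1, I * (r + h ^ 4)⁻¹)
      = I * (Real.log (1 + h ^ 4) - 4 * Real.log h) := by
    rw [integral_const_mul]
    congr 1
    rw [← integral_Ioc_eq_integral_Ioo, ← intervalIntegral.integral_of_le zero_le_one]
    have hcv := intervalIntegral.integral_comp_add_right (a := (0 : ℝ)) (b := 1)
      (fun u => u⁻¹) (h ^ 4)
    rw [hcv, zero_add, integral_inv_of_pos (by positivity) (by positivity),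
      Real.log_div (by positivity) (by positivity), Real.log_pow]
    push_cast
    ring
  have hlog1 : Real.log (1 + h ^ 4) ≤ 1 := by
    have := Real.log_le_sub_one_of_pos (show (0 : ℝ) < 1 + h ^ 4 by positivity)
    nlinarith [pow_le_one₀ hh0.le hh1.le (n := 4)]
  calc (∫ r in Set.Ioo (0 : ℝ) 1,
      ∫ y in D, (r ^ (1 / 4 : ℝ) + ‖x - y‖ + h) ^ (-6 : ℝ))
      ≤ ∫ r in Set.Ioo (0 : ℝ) 1, I * (r + h ^ 4)⁻¹ := houter
    _ = I * (Real.log (1 + h ^ 4) - 4 * Real.log h) := hcomp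
    _ ≤ (4 * I + 1) * (1 - Real.log h) := by
        nlinarith [mul_le_mul_of_nonneg_left hlog1 hI0, hI0, hL]
end

section
/- Let u_A be uniformly bounded, |u_A| ≤ M, and let N(u,v) = f(u+v)-f(u)-f'(u)v = v^2(3u+v) with f(u)=u^3-u. Then for any Y, Z ∈ L^3(D) with ‖Z‖_{L^∞} ≤ K ≤ 1: |⟨N(u_A, Y+Z), Z⟩| ≤ C K ( K^3 + K^2 + ‖Y‖_{L^3}^2 + ‖Y‖_{L^3}^3 ), where C depends only on M and |D|. -/
open MeasureTheory

open ENNReal in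
private lemma stmt13_aux (M t K : ℝ) (hM : 0 < M) (ht : 0 ≤ t) (hK0 : 0 ≤ K) (hK1 : K ≤ 1) :
    (t + K) ^ 2 * (3 * M + 1 + t) * K ≤
      (6 * M + 3) * K * K ^ 2 + (6 * M + 3) * K * t ^ 2 + (6 * M + 3) * K * t ^ 3 := by
  have h2 : (t + K) ^ 2 ≤ 2 * t ^ 2 + 2 * K ^ 2 := by nlinarith [sq_nonneg (t - K)]
  have hpos : (0:ℝ) ≤ 3 * M + 1 + t := by linarith
  have e1 : (t + K) ^ 2 * (3 * M + 1 + t) ≤ (2 * t ^ 2 + 2 * K ^ 2) * (3 * M + 1 + t) :=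
    mul_le_mul_of_nonneg_right h2 hpos
  have e2 : (2 * t ^ 2 + 2 * K ^ 2) * (3 * M + 1 + t) ≤ (6 * M + 3) * (K ^ 2 + t ^ 2 + t ^ 3) := by
    nlinarith [sq_nonneg (K * t - K), mul_nonneg (mul_nonneg hM.le ht) (sq_nonneg t),
      mul_nonneg (sub_nonneg.2 hK1) (sq_nonneg t), mul_nonneg hK0 (sq_nonneg t),
      mul_nonneg (mul_nonneg (sub_nonneg.2 hK1) (sub_nonneg.2 hK1)) (sq_nonneg t)]
  calc (t + K) ^ 2 * (3 * M + 1 + t) * K ≤ (6 * M + 3) * (K ^ 2 + t ^ 2 + t ^ 3) * K :=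
        mul_le_mul_of_nonneg_right (e1.trans e2) hK0
    _ = (6 * M + 3) * K * K ^ 2 + (6 * M + 3) * K * t ^ 2 + (6 * M + 3) * K * t ^ 3 := by ring


/-- With `N(u,v) = v²(3u+v)` (from `f(u)=u³-u`), `|u_A| ≤ M`, `‖Z‖_{L^∞} ≤ K ≤ 1` and
`Y ∈ L³(D)`, one has
`|⟨N(u_A, Y+Z), Z⟩| ≤ C K (K³ + K² + ‖Y‖_{L³}² + ‖Y‖_{L³}³)` with `C = C(M, |D|)`. -/
theorem stmt13 (M : ℝ) (hM : 0 < M) :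
    ∃ C : ℝ, 0 < C ∧
      ∀ (uA Z Y : ℝ × ℝ → ℝ) (K : ℝ), 0 ≤ K → K ≤ 1 →
        (∀ x ∈ Set.Icc ((0 : ℝ), (0 : ℝ)) (1, 1), |uA x| ≤ M) →
        (∀ x ∈ Set.Icc ((0 : ℝ), (0 : ℝ)) (1, 1), |Z x| ≤ K) →
        Measurable uA → Measurable Z → Measurable Y →
        IntegrableOn (fun x => |Y x| ^ 3) (Set.Icc ((0 : ℝ), (0 : ℝ)) (1, 1)) volume →
        |∫ x in Set.Icc ((0 : ℝ), (0 : ℝ)) (1, 1),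
            ((Y x + Z x) ^ 2 * (3 * uA x + (Y x + Z x))) * Z x|
          ≤ C * K * (K ^ 3 + K ^ 2 +
              (∫ x in Set.Icc ((0 : ℝ), (0 : ℝ)) (1, 1), |Y x| ^ 3) ^ ((2 : ℝ) / 3) +
              (∫ x in Set.Icc ((0 : ℝ), (0 : ℝ)) (1, 1), |Y x| ^ 3)) := by
  refine ⟨6 * M + 3, by linarith, ?_⟩
  intro uA Z Y K hK0 hK1 huA hZ hmuA hmZ hmY hY3
  set S : Set (ℝ × ℝ) := Set.Icc ((0 : ℝ), (0 : ℝ)) (1, 1) with hSdef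
  have hSm : MeasurableSet S := measurableSet_Icc
  have hvol : volume S = 1 := by
    rw [hSdef, Set.Icc_prod_eq, Measure.volume_eq_prod, Measure.prod_prod]
    simp [Real.volume_Icc]
  set μ := volume.restrict S with hμ
  haveI hprob : IsProbabilityMeasure μ := ⟨by rw [hμ, Measure.restrict_apply_univ, hvol]⟩
  have hY3' : Integrable (fun x => |Y x| ^ 3) μ := hY3
  set I : ℝ := ∫ x, |Y x| ^ 3 ∂μ with hI
  have hI0 : 0 ≤ I := integral_nonneg fun x => by positivity
  have h3eq : (fun x => ‖Y x‖ ^ ((3 : ENNReal)).toReal) = fun x => |Y x| ^ 3 := by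
    funext x
    rw [show ((3 : ENNReal)).toReal = ((3 : ℕ) : ℝ) by simp, Real.rpow_natCast, Real.norm_eq_abs]
  have hY3mem : MemLp Y 3 μ := by
    refine (memLp_norm_rpow_iff (q := 3) hmY.aestronglyMeasurable (by norm_num)
      (by norm_num)).1 ?_
    rw [h3eq, ENNReal.div_self (by norm_num) (by norm_num)]
    exact memLp_one_iff_integrable.2 hY3'
  have h2eq : (fun x => ‖Y x‖ ^ ((2 : ENNReal)).toReal) = fun x => |Y x| ^ 2 := by
    funext x
    rw [show ((2 : ENNReal)).toReal = ((2 : ℕ) : ℝ) by simp, Real.rpow_natCast, Real.norm_eq_abs]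
  have hf : MemLp (fun x => |Y x| ^ 2) (ENNReal.ofReal (3 / 2)) μ := by
    have h := hY3mem.norm_rpow_div 2
    rw [h2eq] at h
    convert h using 2
    rw [ENNReal.ofReal_div_of_pos (by norm_num)]
    norm_num
  have hY2' : Integrable (fun x => |Y x| ^ 2) μ := by
    refine hf.integrable ?_
    rw [show (1 : ENNReal) = ENNReal.ofReal 1 by simp]
    exact ENNReal.ofReal_le_ofReal (by norm_num)
  have holder : ∫ x, |Y x| ^ 2 ∂μ ≤ I ^ ((2 : ℝ) / 3) := by
    have hpq : Real.HolderConjugate (3 / 2) 3 := Real.holderConjugate_iff.mpr ⟨by norm_num, by norm_num⟩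
    have hg : MemLp (fun _ : ℝ × ℝ => (1 : ℝ)) (ENNReal.ofReal 3) μ := memLp_const 1
    have h := integral_mul_le_Lp_mul_Lq_of_nonneg hpq
      (f := fun x => |Y x| ^ 2) (g := fun _ => (1 : ℝ))
      (Filter.Eventually.of_forall fun x => by positivity)
      (Filter.Eventually.of_forall fun _ => zero_le_one) hf hg
    have e1 : ∀ x : ℝ × ℝ, (|Y x| ^ 2 : ℝ) ^ ((3 : ℝ) / 2) = |Y x| ^ 3 := by
      intro x
      rw [← Real.rpow_natCast (|Y x|) 2, ← Real.rpow_mul (abs_nonneg _),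
        ← Real.rpow_natCast (|Y x|) 3]
      norm_num
    simp only [mul_one, e1, Real.one_rpow] at h
    rw [integral_const, probReal_univ] at h
    simpa using h.trans_eq (by norm_num [hI])
  have hBint : Integrable
      (fun x => (6 * M + 3) * K * K ^ 2 + (6 * M + 3) * K * |Y x| ^ 2
        + (6 * M + 3) * K * |Y x| ^ 3) μ :=
    ((integrable_const _).add (hY2'.const_mul _)).add (hY3'.const_mul _)
  have hbound : ∀ᵐ x ∂μ, ‖((Y x + Z x) ^ 2 * (3 * uA x + (Y x + Z x))) * Z x‖
      ≤ (6 * M + 3) * K * K ^ 2 + (6 * M + 3) * K * |Y x| ^ 2 + (6 * M + 3) * K * |Y x| ^ 3 := by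
    filter_upwards [ae_restrict_mem hSm] with x hx
    have hu := huA x hx
    have hz : |Z x| ≤ K := hZ x hx
    have ht0 : (0:ℝ) ≤ |Y x| := abs_nonneg _
    have habs : ‖((Y x + Z x) ^ 2 * (3 * uA x + (Y x + Z x))) * Z x‖
        ≤ (|Y x| + K) ^ 2 * (3 * M + 1 + |Y x|) * K := by
      rw [Real.norm_eq_abs, abs_mul, abs_mul]
      have h1 : |((Y x + Z x) ^ 2)| ≤ (|Y x| + K) ^ 2 := by
        rw [abs_pow]
        refine pow_le_pow_left₀ (abs_nonneg _) ?_ 2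
        calc |Y x + Z x| ≤ |Y x| + |Z x| := abs_add_le _ _
          _ ≤ |Y x| + K := by linarith
      have h2 : |3 * uA x + (Y x + Z x)| ≤ 3 * M + 1 + |Y x| := by
        have := abs_add_le (3 * uA x) (Y x + Z x)
        have h3 := abs_add_le (Y x) (Z x)
        have h4 : |3 * uA x| = 3 * |uA x| := by rw [abs_mul]; norm_num
        nlinarith
      exact mul_le_mul (mul_le_mul h1 h2 (abs_nonneg _) (by positivity)) hz
        (abs_nonneg _) (by positivity)
    exact habs.trans (stmt13_aux M (|Y x|) K hM ht0 hK0 hK1)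
  have hFmeas : AEStronglyMeasurable
      (fun x => ((Y x + Z x) ^ 2 * (3 * uA x + (Y x + Z x))) * Z x) μ :=
    ((((hmY.add hmZ).pow_const 2).mul ((hmuA.const_mul 3).add (hmY.add hmZ))).mul
      hmZ).aestronglyMeasurable
  have hFint : Integrable (fun x => ((Y x + Z x) ^ 2 * (3 * uA x + (Y x + Z x))) * Z x) μ :=
    Integrable.mono' hBint hFmeas hbound
  have hIB : ∫ x, ((6 * M + 3) * K * K ^ 2 + (6 * M + 3) * K * |Y x| ^ 2
        + (6 * M + 3) * K * |Y x| ^ 3) ∂μ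
      = (6 * M + 3) * K * K ^ 2 + (6 * M + 3) * K * (∫ x, |Y x| ^ 2 ∂μ)
        + (6 * M + 3) * K * I := by
    rw [integral_add (show Integrable
        (fun x => (6 * M + 3) * K * K ^ 2 + (6 * M + 3) * K * |Y x| ^ 2) μ from
        (integrable_const _).add (hY2'.const_mul _)) (hY3'.const_mul _),
      integral_add (integrable_const ((6 * M + 3) * K * K ^ 2)) (hY2'.const_mul _),
      integral_const, integral_const_mul, integral_const_mul, probReal_univ]
    simp [hI]
  have key : ∫ x, ‖((Y x + Z x) ^ 2 * (3 * uA x + (Y x + Z x))) * Z x‖ ∂μ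
      ≤ (6 * M + 3) * K * (K ^ 3 + K ^ 2 + I ^ ((2 : ℝ) / 3) + I) := by
    have h1 := integral_mono_ae hFint.norm hBint hbound
    rw [hIB] at h1
    refine h1.trans ?_
    have hcK : (0:ℝ) ≤ (6 * M + 3) * K := by positivity
    nlinarith [mul_le_mul_of_nonneg_left holder hcK, mul_nonneg hcK (pow_nonneg hK0 3)]
  rw [← Real.norm_eq_abs]
  exact (norm_integral_le_integral_norm _).trans key
end
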